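/- Let n be a natural number and A a left brace of cardinality p^n where p is a prime number with p > n+1. Then pA = {p·a : a ∈ A} is a sub-brace of A, and every product under the operation * (with any placement of brackets) of p−1 elements of pA equals zero. Moreover, every product under * (any bracketing) of elements of A in which at least i of the factors belong to pA lies in p^i·A; consequently every such product in which p−1 of the factors belong to pA equals zero. -/

import Mathlib

universe u

/-- A left brace: `(A,+)` abelian group, `(A,∘)` a group, with
`a∘(b+c)+a = a∘b+a∘c`. -/
structure LeftBrace (A : Type u) [AddCommGroup A] where
  circ : A → A → A
  one : A
  inv : A → A
  circ_assoc : ∀ a b c : A, circ (circ a b) c = circ a (circ b c)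
  one_circ : ∀ a : A, circ one a = a
  circ_one : ∀ a : A, circ a one = a
  inv_circ : ∀ a : A, circ (inv a) a = one
  circ_add : ∀ a b c : A, circ a (b + c) + a = circ a b + circ a c

/-- `a*b = a∘b - a - b`. -/
def LeftBrace.star {A : Type u} [AddCommGroup A] (B : LeftBrace A) (a b : A) : A :=
  B.circ a b - a - b

/-- `ann(k) = {a : k•a = 0}`, as an additive subgroup. -/
def annSub (A : Type u) [AddCommGroup A] (k : ℕ) : AddSubgroup A where
  carrier := {a : A | k • a = 0}
  zero_mem' := by simp
  add_mem' := by
    intro a b ha hb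
    have ha' : k • a = 0 := ha
    have hb' : k • b = 0 := hb
    show k • (a + b) = 0
    rw [smul_add, ha', hb', add_zero]
  neg_mem' := by
    intro a ha
    have ha' : k • a = 0 := ha
    show k • (-a) = 0
    rw [smul_neg, ha', neg_zero]

/-- The coset `[a]` of `a` in `A/ann(k)`. -/
def qmk {A : Type u} [AddCommGroup A] (k : ℕ) (a : A) : A ⧸ annSub A k :=
  QuotientAddGroup.mk a

/-- Evaluation of a non-associative word under a binary operation `op`,
substituting `f i` for the variable `i`. -/
def wEval {α : Type*} {β : Type*} (op : β → β → β) (f : α → β) : FreeMagma α → β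
  | FreeMagma.of a => f a
  | FreeMagma.mul x y => op (wEval op f x) (wEval op f y)

/-- The list of leaves (occurrences of variables, left to right) of a word. -/
def wLeaves {α : Type*} : FreeMagma α → List α
  | FreeMagma.of a => [a]
  | FreeMagma.mul x y => wLeaves x ++ wLeaves y

/-- The last (rightmost) variable of a word. -/
def wLast {α : Type*} : FreeMagma α → α
  | FreeMagma.of a => a
  | FreeMagma.mul _ y => wLast y

/-- The number of occurrences of the variable `a` in a word. -/
def wCount {α : Type*} [DecidableEq α] (a : α) : FreeMagma α → ℕ
  | FreeMagma.of b => if b = a then 1 else 0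
  | FreeMagma.mul x y => wCount a x + wCount a y

/-- The length (number of variable occurrences) of a word. -/
def wLen {α : Type*} : FreeMagma α → ℕ
  | FreeMagma.of _ => 1
  | FreeMagma.mul x y => wLen x + wLen y

/-- Left-normed product `a₁·(a₂·(⋯(aₘ·b)⋯))`. -/
def leftProd {Q : Type*} (mul : Q → Q → Q) : List Q → Q → Q
  | [], b => b
  | a :: l, b => mul a (leftProd mul l b)

/-- `circPow B a k` is the product of `k` copies of `a` under `∘`. -/
def circPow {A : Type u} [AddCommGroup A] (B : LeftBrace A) (a : A) : ℕ → A
  | 0 => B.one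
  | k + 1 => B.circ a (circPow B a k)

/-- `eSeq B a (i-1)` is `a_i`, where `a_1 = a` and `a_{i+1} = a * a_i`. -/
def eSeq {A : Type u} [AddCommGroup A] (B : LeftBrace A) (a : A) : ℕ → A
  | 0 => a
  | i + 1 => B.star a (eSeq B a i)

/-- `starIter B a b (i-1)` is `e_i`, where `e_1 = a*b` and `e_{i+1} = a*e_i`. -/
def starIter {A : Type u} [AddCommGroup A] (B : LeftBrace A) (a b : A) : ℕ → A
  | 0 => B.star a b
  | i + 1 => B.star a (starIter B a b i)

/-- `iterOp op u v i` is `u ⊙ (u ⊙ (⋯ (u ⊙ v)))` with `i` applications of `u ⊙ ·`. -/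
def iterOp {Q : Type*} (op : Q → Q → Q) (u v : Q) : ℕ → Q
  | 0 => v
  | i + 1 => op u (iterOp op u v i)

/-- `f(a) = Σ_{i=1}^{p−1} (C(p−1,i−1)/i)·e_i` where `e_1 = a`, `e_{i+1} = a*e_i`. -/
def fMap {A : Type u} [AddCommGroup A] (B : LeftBrace A) (p : ℕ) (a : A) : A :=
  ∑ i ∈ Finset.Icc 1 (p - 1), (Nat.choose (p - 1) (i - 1) / i) • eSeq B a (i - 1)

/-- `braceChainAux B (i-1)` is `A^i`: `A^1 = A`, `A^{i+1}` the additive subgroup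
generated by `{x*y : x ∈ A, y ∈ A^i}`. -/
def braceChainAux {A : Type u} [AddCommGroup A] (B : LeftBrace A) : ℕ → AddSubgroup A
  | 0 => ⊤
  | i + 1 => AddSubgroup.closure {z : A | ∃ x : A, ∃ y ∈ braceChainAux B i, z = B.star x y}

/-- `dSeq B a b i = (d_i, d_i')`: `d_0 = a`, `d_0' = b`, `d_{i+1} = d_i + d_i'`,
`d_{i+1}' = d_i * d_i'`. -/
def dSeq {A : Type u} [AddCommGroup A] (B : LeftBrace A) (a b : A) : ℕ → A × A
  | 0 => (a, b)
  | i + 1 => ((dSeq B a b i).1 + (dSeq B a b i).2, B.star (dSeq B a b i).1 (dSeq B a b i).2)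

set_option linter.unusedSectionVars false
set_option linter.unusedVariables false

namespace S16

open Finset

variable {A : Type u} [AddCommGroup A]

/-! ### Basic brace lemmas -/

lemma circ_zero (B : LeftBrace A) (a : A) : B.circ a 0 = a := by
  have h := B.circ_add a 0 0
  rw [add_zero] at h
  exact (add_left_cancel h).symm

lemma one_eq_zero (B : LeftBrace A) : B.one = 0 := by
  have h1 := circ_zero B B.one
  have h2 := B.one_circ (0 : A)
  exact h1.symm.trans h2

lemma zero_circ (B : LeftBrace A) (x : A) : B.circ 0 x = x := by
  have := B.one_circ x
  rwa [one_eq_zero] at this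

/-- `λ_a` as an additive endomorphism. -/
def lam (B : LeftBrace A) (a : A) : AddMonoid.End A where
  toFun x := B.circ a x - a
  map_zero' := by
    show B.circ a 0 - a = 0
    rw [circ_zero]; exact sub_self a
  map_add' x y := by
    show B.circ a (x + y) - a = (B.circ a x - a) + (B.circ a y - a)
    have h := B.circ_add a x y
    have h2 : B.circ a (x + y) = B.circ a x + B.circ a y - a := by
      rw [← h]; abel
    rw [h2]; abel

lemma lam_apply (B : LeftBrace A) (a x : A) : lam B a x = B.circ a x - a := rfl

lemma circ_eq_lam (B : LeftBrace A) (a x : A) : B.circ a x = a + lam B a x := by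
  rw [lam_apply]; abel

lemma lam_circ (B : LeftBrace A) (a b : A) :
    lam B (B.circ a b) = lam B a * lam B b := by
  refine AddMonoidHom.ext fun x => ?_
  show B.circ (B.circ a b) x - B.circ a b = lam B a (lam B b x)
  have h := map_sub (lam B a) (B.circ b x) b
  simp only [lam_apply] at h
  have hsub : B.circ a (B.circ b x - b) = B.circ a (B.circ b x) - B.circ a b + a := by
    calc B.circ a (B.circ b x - b) = (B.circ a (B.circ b x - b) - a) + a := by abel
      _ = ((B.circ a (B.circ b x) - a) - (B.circ a b - a)) + a := by rw [h]
      _ = B.circ a (B.circ b x) - B.circ a b + a := by abel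
  rw [lam_apply, lam_apply, hsub, B.circ_assoc]
  abel

lemma lam_zero (B : LeftBrace A) : lam B 0 = 1 := by
  refine AddMonoidHom.ext fun x => ?_
  show B.circ 0 x - 0 = x
  rw [zero_circ, sub_zero]

lemma circ_inv (B : LeftBrace A) (a : A) : B.circ a (B.inv a) = B.one := by
  have h1 := B.inv_circ a
  have h2 := B.inv_circ (B.inv a)
  calc B.circ a (B.inv a)
      = B.circ B.one (B.circ a (B.inv a)) := (B.one_circ _).symm
    _ = B.circ (B.circ (B.inv (B.inv a)) (B.inv a)) (B.circ a (B.inv a)) := by rw [h2]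
    _ = B.circ (B.inv (B.inv a)) (B.circ (B.circ (B.inv a) a) (B.inv a)) := by
        rw [B.circ_assoc, B.circ_assoc]
    _ = B.circ (B.inv (B.inv a)) (B.circ B.one (B.inv a)) := by rw [h1]
    _ = B.circ (B.inv (B.inv a)) (B.inv a) := by rw [B.one_circ]
    _ = B.one := h2

lemma lam_mul_inv (B : LeftBrace A) (a : A) : lam B a * lam B (B.inv a) = 1 := by
  rw [← lam_circ, circ_inv, one_eq_zero, lam_zero]

lemma lam_inv_mul (B : LeftBrace A) (a : A) : lam B (B.inv a) * lam B a = 1 := by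
  rw [← lam_circ, B.inv_circ, one_eq_zero, lam_zero]

lemma circ_lam_inv (B : LeftBrace A) (u z : A) :
    B.circ u (lam B (B.inv u) z) = u + z := by
  rw [circ_eq_lam]
  have : lam B u (lam B (B.inv u) z) = (lam B u * lam B (B.inv u)) z := rfl
  rw [this, lam_mul_inv]
  rfl

lemma inv_eq_neglam (B : LeftBrace A) (x : A) : B.inv x = - lam B (B.inv x) x := by
  have h : lam B (B.inv x) x = B.circ (B.inv x) x - B.inv x := rfl
  rw [h, B.inv_circ, one_eq_zero]
  abel

lemma star_eq (B : LeftBrace A) (a b : A) : B.star a b = lam B a b - b := by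
  show B.circ a b - a - b = lam B a b - b
  rw [lam_apply]

lemma star_eq' (B : LeftBrace A) (a b : A) : B.star a b = (lam B a - 1) b := by
  rw [star_eq]
  rfl

lemma star_add (B : LeftBrace A) (a x y : A) :
    B.star a (x + y) = B.star a x + B.star a y := by
  rw [star_eq, star_eq, star_eq, map_add]; abel

/-! ### The series F_i -/

def Fser (B : LeftBrace A) : ℕ → AddSubgroup A
  | 0 => ⊥
  | i + 1 =>
    { carrier := {x : A | ∀ a : A, B.star a x ∈ Fser B i}
      zero_mem' := by
        intro a
        have : B.star a 0 = 0 := by rw [star_eq, map_zero, sub_zero]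
        rw [this]; exact (Fser B i).zero_mem
      add_mem' := by
        intro x y hx hy a
        rw [star_add]
        exact (Fser B i).add_mem (hx a) (hy a)
      neg_mem' := by
        intro x hx a
        have : B.star a (-x) = - B.star a x := by
          rw [star_eq, star_eq, map_neg]; abel
        rw [this]
        exact (Fser B i).neg_mem (hx a) }

lemma mem_Fser_succ {B : LeftBrace A} {i : ℕ} {x : A} :
    x ∈ Fser B (i + 1) ↔ ∀ a : A, B.star a x ∈ Fser B i := Iff.rfl

lemma Fser_mono (B : LeftBrace A) : ∀ i, Fser B i ≤ Fser B (i + 1) := by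
  intro i
  induction i with
  | zero => exact bot_le
  | succ i ih =>
    intro x hx a
    exact ih (hx a)

lemma lam_mem_Fser (B : LeftBrace A) : ∀ (i : ℕ) (c x : A), x ∈ Fser B i →
    lam B c x ∈ Fser B i := by
  intro i
  induction i with
  | zero =>
    intro c x hx
    have : x = 0 := hx
    rw [this, map_zero]
    exact (Fser B 0).zero_mem
  | succ i ih =>
    intro c x hx a
    have key : B.star a (lam B c x) = lam B c (B.star (B.circ (B.inv c) (B.circ a c)) x) := by
      rw [star_eq, star_eq, map_sub]
      congr 1
      have h1 : lam B c (lam B (B.circ (B.inv c) (B.circ a c)) x)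
          = (lam B c * lam B (B.circ (B.inv c) (B.circ a c))) x := rfl
      rw [h1, ← lam_circ]
      have h2 : B.circ c (B.circ (B.inv c) (B.circ a c)) = B.circ a c := by
        rw [← B.circ_assoc, circ_inv, B.one_circ]
      rw [h2, lam_circ]
      rfl
    rw [key]
    exact ih c _ (hx _)

lemma star_mem_Fser {B : LeftBrace A} {i : ℕ} {x : A} (a : A)
    (hx : x ∈ Fser B (i + 1)) : B.star a x ∈ Fser B i := hx a

lemma pow_star_mem_Fser (B : LeftBrace A) (b : A) :
    ∀ (j : ℕ) (i : ℕ) (x : A), 1 ≤ j → x ∈ Fser B (i + 1) →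
      ((lam B b - 1) ^ j) x ∈ Fser B i := by
  intro j
  induction j with
  | zero => intro i x h; omega
  | succ j ih =>
    intro i x _ hx
    rcases Nat.eq_zero_or_pos j with hj | hj
    · subst hj
      simp only [zero_add, pow_one]
      rw [← star_eq']
      exact hx b
    · have h1 : ((lam B b - 1) ^ (j + 1)) x = (lam B b - 1) (((lam B b - 1) ^ j) x) := by
        rw [pow_succ']
        rfl
      rw [h1, ← star_eq']
      have h2 : ((lam B b - 1) ^ j) x ∈ Fser B i := ih i x hj hx
      exact star_mem_Fser b (Fser_mono B i h2)

lemma pow_eq_zero_of_mem_Fser (B : LeftBrace A) (b : A) :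
    ∀ (i : ℕ) (x : A), x ∈ Fser B i → ((lam B b - 1) ^ i) x = 0 := by
  intro i
  induction i with
  | zero => intro x hx; exact hx
  | succ i ih =>
    intro x hx
    have h1 : ((lam B b - 1) ^ (i + 1)) x = ((lam B b - 1) ^ i) ((lam B b - 1) x) := by
      rw [pow_succ]
      rfl
    rw [h1]
    apply ih
    rw [← star_eq']
    exact hx b


/-! ### The circle group -/

structure CircGrp (B : LeftBrace A) : Type u where
  val : A

instance (B : LeftBrace A) : Group (CircGrp B) where
  mul g h := ⟨B.circ g.val h.val⟩
  one := ⟨B.one⟩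
  inv g := ⟨B.inv g.val⟩
  mul_assoc g h k := congrArg CircGrp.mk (B.circ_assoc g.val h.val k.val)
  one_mul g := congrArg CircGrp.mk (B.one_circ g.val)
  mul_one g := congrArg CircGrp.mk (B.circ_one g.val)
  inv_mul_cancel g := congrArg CircGrp.mk (B.inv_circ g.val)

lemma circ_card (B : LeftBrace A) : Nat.card (CircGrp B) = Nat.card A :=
  Nat.card_congr ⟨CircGrp.val, CircGrp.mk, fun _ => rfl, fun _ => rfl⟩

def qmap (B : LeftBrace A) (i : ℕ) (g : CircGrp B) :
    A ⧸ Fser B i → A ⧸ Fser B i :=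
  QuotientAddGroup.map (Fser B i) (Fser B i) (lam B g.val)
    (fun x hx => lam_mem_Fser B i g.val x hx)

lemma qmap_mk (B : LeftBrace A) (i : ℕ) (g : CircGrp B) (x : A) :
    qmap B i g (QuotientAddGroup.mk x) = QuotientAddGroup.mk (lam B g.val x) :=
  QuotientAddGroup.map_mk _ _ _ _ x

instance (B : LeftBrace A) (i : ℕ) : MulAction (CircGrp B) (A ⧸ Fser B i) where
  smul g q := qmap B i g q
  one_smul q := by
    refine QuotientAddGroup.induction_on q (fun x => ?_)
    show qmap B i 1 (QuotientAddGroup.mk x) = QuotientAddGroup.mk x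
    rw [qmap_mk]
    have h1 : (1 : CircGrp B).val = B.one := rfl
    rw [h1, one_eq_zero, lam_zero]
    rfl
  mul_smul g h q := by
    refine QuotientAddGroup.induction_on q (fun x => ?_)
    show qmap B i (g * h) (QuotientAddGroup.mk x)
        = qmap B i g (qmap B i h (QuotientAddGroup.mk x))
    rw [qmap_mk, qmap_mk, qmap_mk]
    have h1 : (g * h).val = B.circ g.val h.val := rfl
    rw [h1, lam_circ]
    rfl

lemma smul_q_mk (B : LeftBrace A) (i : ℕ) (g : CircGrp B) (x : A) :
    g • (QuotientAddGroup.mk x : A ⧸ Fser B i) = QuotientAddGroup.mk (lam B g.val x) :=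
  qmap_mk B i g x

section Card

variable (p n : ℕ)

lemma finiteA (hp : p.Prime) (hcard : Nat.card A = p ^ n) : Finite A :=
  Nat.finite_of_card_ne_zero (by rw [hcard]; exact pow_ne_zero _ hp.pos.ne')

lemma exists_step (B : LeftBrace A) (hp : p.Prime) (hcard : Nat.card A = p ^ n)
    (i : ℕ) (hF : Fser B i ≠ ⊤) :
    ∃ x : A, x ∉ Fser B i ∧ x ∈ Fser B (i + 1) := by
  haveI : Finite A := finiteA p n hp hcard
  haveI : Fact p.Prime := ⟨hp⟩
  haveI : IsPGroup p (CircGrp B) := IsPGroup.of_card (n := n) (by rw [circ_card, hcard])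
  have hmod := IsPGroup.card_modEq_card_fixedPoints (p := p) (G := CircGrp B)
    ‹IsPGroup p (CircGrp B)› (A ⧸ Fser B i)
  -- p divides the cardinality of the quotient
  have hQdvd : Nat.card (A ⧸ Fser B i) ∣ p ^ n := by
    rw [← hcard]
    exact ⟨Nat.card (Fser B i), AddSubgroup.card_eq_card_quotient_mul_card_addSubgroup _⟩
  obtain ⟨k, hk, hQ⟩ := (Nat.dvd_prime_pow hp).mp hQdvd
  have hk0 : k ≠ 0 := by
    intro h0
    rw [h0, pow_zero] at hQ
    obtain ⟨hsub, -⟩ := Nat.card_eq_one_iff_unique.mp hQ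
    apply hF
    ext x
    simp only [AddSubgroup.mem_top, iff_true]
    have : (QuotientAddGroup.mk x : A ⧸ Fser B i) = 0 := Subsingleton.elim _ _
    exact (QuotientAddGroup.eq_zero_iff x).mp this
  have hpQ : p ∣ Nat.card (A ⧸ Fser B i) := by
    rw [hQ]
    exact dvd_pow_self p hk0
  have hpfix : p ∣ Nat.card (MulAction.fixedPoints (CircGrp B) (A ⧸ Fser B i)) := by
    rcases Nat.le_total (Nat.card (A ⧸ Fser B i))
        (Nat.card (MulAction.fixedPoints (CircGrp B) (A ⧸ Fser B i))) with hle | hle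
    · obtain ⟨c, hc⟩ := (Nat.modEq_iff_dvd' hle).mp hmod
      have : Nat.card (MulAction.fixedPoints (CircGrp B) (A ⧸ Fser B i))
          = Nat.card (A ⧸ Fser B i) + p * c := by omega
      rw [this]
      exact Dvd.dvd.add hpQ (Dvd.intro c rfl)
    · obtain ⟨c, hc⟩ := (Nat.modEq_iff_dvd' hle).mp hmod.symm
      have : Nat.card (A ⧸ Fser B i) = Nat.card (MulAction.fixedPoints (CircGrp B) (A ⧸ Fser B i)) + p * c := by omega
      have := hpQ
      rw [‹Nat.card (A ⧸ Fser B i) = _›] at this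
      exact (Nat.dvd_add_right (Dvd.intro c rfl)).mp (by rwa [Nat.add_comm] at this)
  -- the zero coset is fixed
  have h0fix : (0 : A ⧸ Fser B i) ∈ MulAction.fixedPoints (CircGrp B) (A ⧸ Fser B i) := by
    intro g
    show qmap B i g 0 = 0
    exact map_zero (QuotientAddGroup.map _ _ _ _)
  haveI : Fintype (MulAction.fixedPoints (CircGrp B) (A ⧸ Fser B i)) := Fintype.ofFinite _
  have hcard2 : 1 < Fintype.card (MulAction.fixedPoints (CircGrp B) (A ⧸ Fser B i)) := by
    have hge1 : 0 < Fintype.card (MulAction.fixedPoints (CircGrp B) (A ⧸ Fser B i)) :=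
      Fintype.card_pos_iff.mpr ⟨⟨0, h0fix⟩⟩
    rcases Nat.lt_or_ge 1 (Fintype.card (MulAction.fixedPoints (CircGrp B) (A ⧸ Fser B i))) with h | h
    · exact h
    · exfalso
      have h1 : Fintype.card (MulAction.fixedPoints (CircGrp B) (A ⧸ Fser B i)) = 1 := by omega
      rw [← Nat.card_eq_fintype_card] at h1
      rw [h1] at hpfix
      exact Nat.Prime.one_lt hp |>.ne' (Nat.dvd_one.mp hpfix)
  obtain ⟨y, hy⟩ := Fintype.exists_ne_of_one_lt_card hcard2 ⟨0, h0fix⟩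
  obtain ⟨q, hqfix⟩ := y
  have hq0 : q ≠ 0 := by
    intro h
    apply hy
    exact Subtype.ext h
  obtain ⟨x, rfl⟩ := QuotientAddGroup.mk_surjective q
  refine ⟨x, ?_, ?_⟩
  · intro hx
    exact hq0 ((QuotientAddGroup.eq_zero_iff x).mpr hx)
  · intro a
    have := hqfix ⟨a⟩
    rw [smul_q_mk] at this
    have hsub : lam B a x - x ∈ Fser B i := QuotientAddGroup.eq_iff_sub_mem.mp this
    rw [star_eq]
    exact hsub

lemma Fser_top (B : LeftBrace A) (hp : p.Prime) (hcard : Nat.card A = p ^ n) :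
    Fser B n = ⊤ := by
  haveI : Finite A := finiteA p n hp hcard
  have key : ∀ i : ℕ, Fser B i = ⊤ ∨ p ^ i ≤ Nat.card (Fser B i) := by
    intro i
    induction i with
    | zero =>
      right
      rw [pow_zero]
      exact Nat.one_le_iff_ne_zero.mpr (Nat.card_ne_zero.mpr ⟨⟨0, (Fser B 0).zero_mem⟩, inferInstance⟩)
    | succ i ih =>
      by_cases htop : Fser B i = ⊤
      · left
        rw [← top_le_iff, ← htop]
        exact Fser_mono B i
      · by_cases htop2 : Fser B (i + 1) = ⊤
        · left; exact htop2
        · right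
          rcases ih with h | h
          · exact absurd h htop
          obtain ⟨x, hx1, hx2⟩ := exists_step p n B hp hcard i htop
          have hlt : Nat.card (Fser B i) < Nat.card (Fser B (i + 1)) := by
            rcases Nat.lt_or_ge (Nat.card (Fser B i)) (Nat.card (Fser B (i + 1))) with h' | h'
            · exact h'
            · exfalso
              have heq : Fser B i = Fser B (i + 1) :=
                SetLike.ext' (Set.eq_of_subset_of_ncard_le (Fser_mono B i)
                  (by rw [← Nat.card_coe_set_eq, ← Nat.card_coe_set_eq]; exact h')
                  (Set.toFinite _))
              rw [heq] at hx1
              exact hx1 hx2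
          -- both cards are powers of p
          have hdvd1 : Nat.card (Fser B i) ∣ p ^ n := by
            rw [← hcard]
            exact ⟨Nat.card (A ⧸ Fser B i), by
              rw [AddSubgroup.card_eq_card_quotient_mul_card_addSubgroup (Fser B i), Nat.mul_comm]⟩
          have hdvd2 : Nat.card (Fser B (i + 1)) ∣ p ^ n := by
            rw [← hcard]
            exact ⟨Nat.card (A ⧸ Fser B (i + 1)), by
              rw [AddSubgroup.card_eq_card_quotient_mul_card_addSubgroup (Fser B (i + 1)), Nat.mul_comm]⟩
          obtain ⟨a, ha, hca⟩ := (Nat.dvd_prime_pow hp).mp hdvd1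
          obtain ⟨b, hb, hcb⟩ := (Nat.dvd_prime_pow hp).mp hdvd2
          rw [hca, hcb] at hlt
          have hab : a < b := by
            by_contra hab
            push_neg at hab
            exact absurd (Nat.pow_le_pow_right hp.pos hab) (Nat.not_le.mpr hlt)
          have hia : p ^ i ≤ p ^ a := by rw [← hca]; exact h
          have : i ≤ a := by
            by_contra hia'
            push_neg at hia'
            exact absurd (Nat.pow_lt_pow_right hp.one_lt hia') (Nat.not_lt.mpr hia)
          calc p ^ (i + 1) ≤ p ^ b := Nat.pow_le_pow_right hp.pos (by omega)
            _ = Nat.card (Fser B (i + 1)) := hcb.symm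
  rcases key n with h | h
  · exact h
  · have hle : Nat.card (Fser B n) ≤ Nat.card A := by
      have : Nat.card (Fser B n) ∣ Nat.card A :=
        ⟨Nat.card (A ⧸ Fser B n), by
          rw [AddSubgroup.card_eq_card_quotient_mul_card_addSubgroup (Fser B n), Nat.mul_comm]⟩
      exact Nat.le_of_dvd Nat.card_pos this
    have heq : Nat.card (Fser B n) = Nat.card A := by
      rw [hcard]; omega
    exact AddSubgroup.eq_top_of_card_eq _ heq

lemma Npow_eq_zero (B : LeftBrace A) (hp : p.Prime) (hcard : Nat.card A = p ^ n) (b : A) :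
    (lam B b - 1) ^ n = 0 := by
  refine AddMonoidHom.ext fun x => ?_
  have hx : x ∈ Fser B n := by rw [Fser_top p n B hp hcard]; trivial
  exact pow_eq_zero_of_mem_Fser B b n x hx

end Card

/-! ### Ring computations -/

lemma end_sum_apply (s : Finset ℕ) (f : ℕ → AddMonoid.End A) (b : A) :
    (∑ i ∈ s, f i) b = ∑ i ∈ s, f i b :=
  map_sum (AddMonoidHom.eval b) f s

lemma onePow {R : Type*} [Ring R] (x : R) (k : ℕ) :
    (1 + x) ^ k = ∑ j ∈ Finset.range (k + 1), k.choose j • x ^ j := by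
  rw [add_comm, Commute.add_pow (Commute.one_right x)]
  refine Finset.sum_congr rfl fun j _ => ?_
  rw [one_pow, mul_one, nsmul_eq_mul]
  exact ((Nat.cast_commute (k.choose j) (x ^ j)).eq).symm

lemma geom {R : Type*} [Ring R] (x : R) (k : ℕ) :
    ∑ i ∈ Finset.range k, (1 + x) ^ i
      = ∑ j ∈ Finset.range k, (k.choose (j + 1)) • x ^ j := by
  induction k with
  | zero => simp
  | succ k ih =>
    rw [Finset.sum_range_succ, ih, onePow]
    have h1 : ∑ j ∈ Finset.range (k + 1), (k + 1).choose (j + 1) • x ^ j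
        = ∑ j ∈ Finset.range (k + 1), (k.choose j • x ^ j + k.choose (j + 1) • x ^ j) := by
      refine Finset.sum_congr rfl fun j _ => ?_
      rw [Nat.choose_succ_succ, add_smul]
    rw [h1, Finset.sum_add_distrib]
    rw [Finset.sum_range_succ (f := fun j => k.choose (j + 1) • x ^ j),
      Nat.choose_succ_self, zero_smul, add_zero, add_comm]

lemma circPow_eq (B : LeftBrace A) (b : A) (k : ℕ) :
    circPow B b k = (∑ i ∈ Finset.range k, (lam B b) ^ i) b := by
  induction k with
  | zero =>
    show B.one = _
    rw [one_eq_zero, Finset.range_zero, Finset.sum_empty]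
    rfl
  | succ k ih =>
    show B.circ b (circPow B b k) = _
    rw [circ_eq_lam, ih]
    have h1 : lam B b ((∑ i ∈ Finset.range k, (lam B b) ^ i) b)
        = (∑ i ∈ Finset.range k, (lam B b) ^ (i + 1)) b := by
      have h2 : lam B b ((∑ i ∈ Finset.range k, (lam B b) ^ i) b)
          = ((lam B b) * (∑ i ∈ Finset.range k, (lam B b) ^ i)) b := rfl
      rw [h2, Finset.mul_sum]
      congr 1
      exact Finset.sum_congr rfl fun i _ => (pow_succ' (lam B b) i).symm
    rw [h1, Finset.sum_range_succ' (f := fun i => (lam B b) ^ i)]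
    have h3 : ((∑ i ∈ Finset.range k, (lam B b) ^ (i + 1)) + (lam B b) ^ 0) b
        = (∑ i ∈ Finset.range k, (lam B b) ^ (i + 1)) b + b := by
      erw [AddMonoidHom.add_apply, pow_zero]
      rfl
    rw [h3, add_comm]

lemma lam_circPow (B : LeftBrace A) (b : A) (k : ℕ) :
    lam B (circPow B b k) = (lam B b) ^ k := by
  induction k with
  | zero =>
    show lam B B.one = _
    rw [one_eq_zero, lam_zero, pow_zero]
  | succ k ih =>
    show lam B (B.circ b (circPow B b k)) = _
    rw [lam_circ, ih, pow_succ']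

/-- The correction term `w` with `b^{∘p} = p•(b + w)`. -/
def wcor (B : LeftBrace A) (p : ℕ) (b : A) : A :=
  ∑ j ∈ Finset.Ico 1 (p - 1), (p.choose (j + 1) / p) • (((lam B b - 1) ^ j) b)

section Main

variable (p n : ℕ)

lemma circPow_p (B : LeftBrace A) (hp : p.Prime) (hpn : n + 1 < p)
    (hcard : Nat.card A = p ^ n) (b : A) :
    circPow B b p = p • (b + wcor B p b) := by
  have hN : (lam B b - 1) ^ (p - 1) = 0 := by
    have hn := Npow_eq_zero p n B hp hcard b
    have h : p - 1 = n + (p - 1 - n) := by omega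
    rw [h, pow_add, hn, zero_mul]
  have h0 : circPow B b p = (∑ j ∈ Finset.range p, p.choose (j + 1) • ((lam B b - 1) ^ j)) b := by
    rw [circPow_eq]
    congr 1
    have h1 : lam B b = 1 + (lam B b - 1) := by abel
    calc ∑ i ∈ Finset.range p, (lam B b) ^ i
        = ∑ i ∈ Finset.range p, (1 + (lam B b - 1)) ^ i := by rw [← h1]
      _ = _ := geom _ p
  rw [h0, end_sum_apply]
  have happ : ∀ j, (p.choose (j + 1) • ((lam B b - 1) ^ j)) b
      = p.choose (j + 1) • (((lam B b - 1) ^ j) b) := fun j => rfl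
  rw [Finset.range_eq_Ico, Finset.sum_eq_sum_Ico_succ_bot hp.pos]
  have hIco : Finset.Ico 1 p = Finset.Ico 1 ((p - 1) + 1) := by
    congr 1
    omega
  rw [hIco, Finset.sum_Ico_succ_top (by omega : 1 ≤ p - 1)]
  have hlast : (p.choose ((p - 1) + 1) • ((lam B b - 1) ^ (p - 1))) b = 0 := by
    rw [happ, hN]
    show p.choose ((p - 1) + 1) • ((0 : AddMonoid.End A) b) = 0
    rw [AddMonoid.End.zero_apply, smul_zero]
  rw [hlast, add_zero]
  have hfirst : ((p.choose (0 + 1) • ((lam B b - 1) ^ 0) : AddMonoid.End A)) b = p • b := by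
    rw [happ, pow_zero]
    show p.choose 1 • ((1 : AddMonoid.End A) b) = p • b
    rw [Nat.choose_one_right]
    rfl
  rw [hfirst, smul_add]
  congr 1
  unfold wcor
  rw [Finset.smul_sum]
  refine Finset.sum_congr rfl fun j hj => ?_
  rw [happ, smul_smul, Nat.mul_div_cancel']
  exact hp.dvd_choose_self (Nat.succ_ne_zero j) (by have := (Finset.mem_Ico.mp hj).2; omega)

lemma wcor_mem_Fser (B : LeftBrace A) (i : ℕ) (b : A) (hb : b ∈ Fser B (i + 1)) :
    wcor B p b ∈ Fser B i :=
  AddSubgroup.sum_mem _ fun j hj =>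
    AddSubgroup.nsmul_mem _ (pow_star_mem_Fser B b j i b (Finset.mem_Ico.mp hj).1 hb) _

lemma wcor_psmul (B : LeftBrace A) (t : ℕ) (b b' : A) (hb : b = p ^ t • b') :
    ∃ w', wcor B p b = p ^ t • w' := by
  refine ⟨∑ j ∈ Finset.Ico 1 (p - 1), (p.choose (j + 1) / p) • (((lam B b - 1) ^ j) b'), ?_⟩
  unfold wcor
  rw [Finset.smul_sum]
  refine Finset.sum_congr rfl fun j _ => ?_
  set M := (lam B b - 1) ^ j with hM
  rw [hb, map_nsmul, smul_comm]

lemma bin {R : Type*} [Ring R] (hp : p.Prime) (t : ℕ) (ψ : R) (hcase : ψ ^ p = 0 ∨ 1 ≤ t) :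
    ∃ χ : R, (1 + p ^ t • ψ) ^ p = 1 + p ^ (t + 1) • χ := by
  refine ⟨∑ j ∈ Finset.Ico 1 (p + 1), ((p.choose j * p ^ (t * j)) / p ^ (t + 1)) • ψ ^ j, ?_⟩
  rw [onePow, Finset.range_eq_Ico, Finset.sum_eq_sum_Ico_succ_bot (by omega : 0 < p + 1)]
  have h0 : p.choose 0 • ((p ^ t • ψ) ^ 0) = 1 := by
    rw [Nat.choose_zero_right, pow_zero, one_smul]
  rw [h0]
  congr 1
  rw [Finset.smul_sum]
  refine Finset.sum_congr rfl fun j hj => ?_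
  obtain ⟨hj1, hj2⟩ := Finset.mem_Ico.mp hj
  rw [smul_pow, smul_smul, smul_smul, ← pow_mul]
  by_cases hdvd : p ^ (t + 1) ∣ p.choose j * p ^ (t * j)
  · rw [Nat.mul_div_cancel' hdvd]
  · rcases Nat.lt_or_ge j p with hjp | hjp
    · exact absurd (by
        rw [pow_succ']
        exact mul_dvd_mul (hp.dvd_choose_self (by omega) hjp)
          (pow_dvd_pow p (Nat.le_mul_of_pos_right t (by omega)))) hdvd
    · have hjp' : j = p := by omega
      rcases hcase with hψ | ht
      · rw [hjp', hψ, smul_zero, smul_zero]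
      · exfalso
        apply hdvd
        have h2 : t * 2 ≤ t * p := Nat.mul_le_mul_left t hp.two_le
        have h3 : t + 1 ≤ t * j := by rw [hjp']; omega
        exact Dvd.dvd.mul_left (pow_dvd_pow p h3) _

lemma Ukey (B : LeftBrace A) (hp : p.Prime) (hpn : n + 1 < p)
    (hcard : Nat.card A = p ^ n) :
    ∀ t : ℕ, ∀ y : A, ∃ ψ : AddMonoid.End A, lam B (p ^ t • y) = 1 + p ^ t • ψ := by
  intro t
  induction t with
  | zero =>
    intro y
    refine ⟨lam B y - 1, ?_⟩
    simp only [pow_zero, one_smul]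
    abel
  | succ t ih =>
    have inner : ∀ i : ℕ, ∀ b : A, b ∈ Fser B i → (∃ b', b = p ^ t • b') →
        ∃ ψ : AddMonoid.End A, lam B (p • b) = 1 + p ^ (t + 1) • ψ := by
      intro i
      induction i with
      | zero =>
        intro b hb _
        have hb0 : b = 0 := hb
        refine ⟨0, ?_⟩
        erw [hb0, smul_zero, lam_zero, smul_zero, add_zero]
      | succ i ihi =>
        rintro b hb ⟨b', hb'⟩
        have hupw : circPow B b p = p • (b + wcor B p b) := circPow_p p n B hp hpn hcard b
        have hlamu : lam B (circPow B b p) = (lam B b) ^ p := lam_circPow B b p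
        have hfac1 : ∃ ψ₁ : AddMonoid.End A, (lam B b) ^ p = 1 + p ^ (t + 1) • ψ₁ := by
          rcases Nat.eq_zero_or_pos t with ht | ht
          · subst ht
            have hNp : (lam B b - 1) ^ p = 0 := by
              have hn := Npow_eq_zero p n B hp hcard b
              have h : p = n + (p - n) := by omega
              rw [h, pow_add, hn, zero_mul]
            have hb1 : lam B b = 1 + p ^ 0 • (lam B b - 1) := by
              rw [pow_zero, one_smul]; abel
            obtain ⟨χ, hχ⟩ := bin p hp 0 (lam B b - 1) (Or.inl hNp)
            exact ⟨χ, by rw [hb1]; exact hχ⟩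
          · obtain ⟨ψ₀, hψ₀⟩ := ih b'
            rw [← hb'] at hψ₀
            obtain ⟨χ, hχ⟩ := bin p hp t ψ₀ (Or.inr ht)
            exact ⟨χ, by rw [hψ₀]; exact hχ⟩
        have hpbw : p • b = B.circ (circPow B b p)
            (p • (- lam B (B.inv (circPow B b p)) (wcor B p b))) := by
          have h1 := circ_lam_inv B (circPow B b p) (p • b - circPow B b p)
          have h2 : p • b - circPow B b p = -(p • wcor B p b) := by
            rw [hupw, smul_add]; abel
          calc p • b = circPow B b p + (p • b - circPow B b p) := by abel
            _ = B.circ (circPow B b p)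
                (lam B (B.inv (circPow B b p)) (p • b - circPow B b p)) := h1.symm
            _ = _ := by rw [h2, map_neg, map_nsmul, ← smul_neg]
        have hvF : - lam B (B.inv (circPow B b p)) (wcor B p b) ∈ Fser B i :=
          (Fser B i).neg_mem
            (lam_mem_Fser B i _ _ (wcor_mem_Fser p B i b hb))
        have hvp : ∃ v', - lam B (B.inv (circPow B b p)) (wcor B p b) = p ^ t • v' := by
          obtain ⟨w', hw'⟩ := wcor_psmul p B t b b' hb'
          exact ⟨- lam B (B.inv (circPow B b p)) w', by rw [hw', map_nsmul, ← smul_neg]⟩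
        obtain ⟨ψ₂, hψ₂⟩ := ihi _ hvF hvp
        obtain ⟨ψ₁, hψ₁⟩ := hfac1
        refine ⟨ψ₁ + ψ₂ + p ^ (t + 1) • (ψ₁ * ψ₂), ?_⟩
        rw [hpbw, lam_circ, hlamu, hψ₁, hψ₂]
        have hexp : (1 + p ^ (t + 1) • ψ₁) * (1 + p ^ (t + 1) • ψ₂)
            = 1 + (p ^ (t + 1) • ψ₁ + p ^ (t + 1) • ψ₂
                + (p ^ (t + 1) • ψ₁) * (p ^ (t + 1) • ψ₂)) := by
          simp only [mul_add, add_mul, mul_one, one_mul]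
          abel
        rw [hexp]
        congr 1
        erw [smul_add, smul_add, smul_mul_assoc, mul_smul_comm]
        rfl
    intro y
    have hy : p ^ t • y ∈ Fser B n := by
      rw [Fser_top p n B hp hcard]
      trivial
    obtain ⟨ψ, hψ⟩ := inner n (p ^ t • y) hy ⟨y, rfl⟩
    refine ⟨ψ, ?_⟩
    rw [← hψ]
    congr 1
    rw [pow_succ', mul_smul]

end Main

section Final

variable (p n : ℕ)

lemma card_smul_zero (hp : p.Prime) (hcard : Nat.card A = p ^ n) (x : A) :
    p ^ n • x = 0 := by
  haveI : Finite A := finiteA p n hp hcard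
  rw [← hcard]
  exact card_nsmul_eq_zero'

lemma big_pow_smul_zero (hp : p.Prime) (hcard : Nat.card A = p ^ n) (m : ℕ)
    (hm : n ≤ m) (c : A) : p ^ m • c = 0 := by
  have h : m = n + (m - n) := by omega
  rw [h, pow_add, mul_smul, card_smul_zero p n hp hcard]

lemma star_padic (B : LeftBrace A) (hp : p.Prime) (hpn : n + 1 < p)
    (hcard : Nat.card A = p ^ n) (j k : ℕ) (a b : A)
    (ha : ∃ a', a = p ^ j • a') (hb : ∃ b', b = p ^ k • b') :
    ∃ c, B.star a b = p ^ (j + k) • c := by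
  obtain ⟨a', rfl⟩ := ha
  obtain ⟨b', rfl⟩ := hb
  obtain ⟨ψ, hψ⟩ := Ukey p n B hp hpn hcard j a'
  refine ⟨ψ b', ?_⟩
  rw [star_eq, hψ]
  have h1 : ((1 + p ^ j • ψ : AddMonoid.End A)) (p ^ k • b')
      = p ^ k • b' + p ^ j • ψ (p ^ k • b') := rfl
  rw [h1, map_nsmul, smul_smul, ← pow_add]
  abel

lemma word_padic (B : LeftBrace A) (hp : p.Prime) (hpn : n + 1 < p)
    (hcard : Nat.card A = p ^ n) (k : ℕ) (x : Fin k → A) (s : Finset (Fin k))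
    (hs : ∀ t ∈ s, ∃ a, x t = p • a) :
    ∀ w : FreeMagma (Fin k), ∃ c, wEval B.star x w
        = p ^ ((wLeaves w).countP (fun t => decide (t ∈ s))) • c := by
  intro w
  induction w with
  | ih1 t =>
    show ∃ c, x t = p ^ (([t]).countP fun u => decide (u ∈ s)) • c
    by_cases ht : t ∈ s
    · obtain ⟨a, ha⟩ := hs t ht
      refine ⟨a, ?_⟩
      have hcnt : (([t]).countP fun u => decide (u ∈ s)) = 1 := by
        simp [List.countP_singleton, ht]
      rw [hcnt, pow_one]
      exact ha
    · refine ⟨x t, ?_⟩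
      have hcnt : (([t]).countP fun u => decide (u ∈ s)) = 0 := by
        simp [List.countP_singleton, ht]
      rw [hcnt, pow_zero, one_smul]
  | ih2 u v ihu ihv =>
    obtain ⟨c, hc⟩ := star_padic p n B hp hpn hcard _ _ _ _ ihu ihv
    refine ⟨c, ?_⟩
    have happ : wEval B.star x (u * v)
        = B.star (wEval B.star x u) (wEval B.star x v) := rfl
    have hlv : wLeaves (u * v) = wLeaves u ++ wLeaves v := rfl
    rw [happ, hc, hlv, List.countP_append]

end Final

end S16

/-- `pA` is a sub-brace of `A`; every `*`-product (any bracketing) of `p−1`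
elements of `pA` is zero; every `*`-product of elements of `A` in which at least `i` of
the factors lie in `pA` lies in `p^i·A`; hence every such product in which `p−1` of the
factors lie in `pA` is zero. -/
theorem stmt_16 (p n : ℕ) (hp : p.Prime) (hpn : n + 1 < p)
    (A : Type u) [AddCommGroup A] (B : LeftBrace A) (hcard : Nat.card A = p ^ n) :
    ∀ pA : Set A, pA = {x : A | ∃ a : A, x = p • a} →
      -- pA is a sub-brace of A
      (((0 : A) ∈ pA ∧ (∀ x ∈ pA, ∀ y ∈ pA, x + y ∈ pA) ∧ (∀ x ∈ pA, -x ∈ pA)) ∧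
        (B.one ∈ pA ∧ (∀ x ∈ pA, ∀ y ∈ pA, B.circ x y ∈ pA) ∧ (∀ x ∈ pA, B.inv x ∈ pA))) ∧
      -- any bracketing of p−1 elements of pA multiplies (under *) to zero
      (∀ (k : ℕ) (w : FreeMagma (Fin k)) (x : Fin k → A),
        (∀ t : Fin k, x t ∈ pA) → (wLeaves w).length = p - 1 →
        wEval B.star x w = 0) ∧
      -- a product with at least i factors from pA lies in p^i·A
      (∀ (k : ℕ) (w : FreeMagma (Fin k)) (x : Fin k → A) (s : Finset (Fin k)) (i : ℕ),
        (∀ t ∈ s, x t ∈ pA) → i ≤ (wLeaves w).countP (fun t => decide (t ∈ s)) →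
        ∃ a : A, wEval B.star x w = p ^ i • a) ∧
      -- a product with p−1 factors from pA is zero
      (∀ (k : ℕ) (w : FreeMagma (Fin k)) (x : Fin k → A) (s : Finset (Fin k)),
        (∀ t ∈ s, x t ∈ pA) → p - 1 ≤ (wLeaves w).countP (fun t => decide (t ∈ s)) →
        wEval B.star x w = 0) := by
  intro pA hpA
  subst hpA
  have hbig : ∀ (m : ℕ), p - 1 ≤ m → ∀ c : A, p ^ m • c = 0 := fun m hm c =>
    S16.big_pow_smul_zero p n hp hcard m (by omega) c
  refine ⟨⟨⟨⟨0, by rw [smul_zero]⟩, ?_, ?_⟩, ⟨0, by rw [S16.one_eq_zero B, smul_zero]⟩, ?_, ?_⟩,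
    ?_, ?_, ?_⟩
  · rintro x ⟨a, rfl⟩ y ⟨b, rfl⟩
    exact ⟨a + b, by rw [smul_add]⟩
  · rintro x ⟨a, rfl⟩
    exact ⟨-a, by rw [smul_neg]⟩
  · rintro x ⟨a, rfl⟩ y ⟨b, rfl⟩
    refine ⟨a + S16.lam B (p • a) b, ?_⟩
    rw [S16.circ_eq_lam, map_nsmul, ← smul_add]
  · rintro x ⟨a, rfl⟩
    refine ⟨- S16.lam B (B.inv (p • a)) a, ?_⟩
    have h := S16.inv_eq_neglam B (p • a)
    rw [map_nsmul] at h
    conv_lhs => rw [h]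
    exact (smul_neg _ _).symm
  · intro k w x hx hlen
    have hcnt : ((wLeaves w).countP fun t => decide (t ∈ (Finset.univ : Finset (Fin k))))
        = (wLeaves w).length := by
      apply List.countP_eq_length.mpr
      intro a _
      simp
    obtain ⟨c, hc⟩ := S16.word_padic p n B hp hpn hcard k x Finset.univ
      (fun t _ => hx t) w
    rw [hc, hcnt, hlen]
    exact hbig (p - 1) (le_refl _) c
  · intro k w x s i hs hi
    obtain ⟨c, hc⟩ := S16.word_padic p n B hp hpn hcard k x s hs w
    refine ⟨p ^ (((wLeaves w).countP fun t => decide (t ∈ s)) - i) • c, ?_⟩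
    rw [hc, smul_smul, ← pow_add]
    congr 2
    omega
  · intro k w x s hs hcnt
    obtain ⟨c, hc⟩ := S16.word_padic p n B hp hpn hcard k x s hs w
    rw [hc]
    exact hbig _ hcnt c
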